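/- Let G be a countable group, Z = lim← G/Γₙ a G-odometer with unique invariant probability measure ν, and (Dₙ)ₙ sets of right-coset representatives of G/Γₙ (Dₙ ⊆ Dₙ₊₁, ⋃ₙDₙ = G). If an increasing sequence (nᵢ) of indices satisfies |D_{n_{i-1}}|/|D_{n_i}| < 1/2^{i+1} for all i, then the set Z₀ = {(tₙΓₙ)ₙ ∈ Z : G = ⋃ᵢ t_{nᵢ}Γ_{nᵢ}D_{n_{i-1}}} has ν(Z₀) = 0. -/
import Mathlib


open MeasureTheory

instance odQuotMeasurable {G : Type*} [Group G] (Γ : Subgroup G) :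
    MeasurableSpace (G ⧸ Γ) := ⊤

def odometerSet {G : Type*} [Group G] (Γ : ℕ → Subgroup G) : Set (Π n, G ⧸ Γ n) :=
  {z | ∀ (n : ℕ) (g : G), z (n + 1) = (g : G ⧸ Γ (n + 1)) → z n = (g : G ⧸ Γ n)}

/-- if (nᵢ) satisfies |D_{n_{i-1}}|/|D_{n_i}| < 1/2^{i+1}, then the set
Z₀ = {(tₙΓₙ)ₙ : G = ⋃ᵢ t_{nᵢ}Γ_{nᵢ}D_{n_{i-1}}} is ν-null for the unique invariant
probability measure ν of the odometer. -/
theorem stmt_7 {G : Type*} [Group G] [Countable G]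
    (Γ : ℕ → Subgroup G) (hdec : ∀ n, Γ (n + 1) ≤ Γ n) (hfi : ∀ n, (Γ n).FiniteIndex)
    (D : ℕ → Finset G)
    -- each Dₘ contains exactly one representative of each right coset Γₘg
    (hreps : ∀ (m : ℕ) (g : G), ∃! d : G, d ∈ D m ∧ d * g⁻¹ ∈ Γ m)
    (hDmono : ∀ m, D m ⊆ D (m + 1))
    (hDunion : (⋃ m : ℕ, (D m : Set G)) = Set.univ)
    (ν : Measure (Π n, G ⧸ Γ n)) (hprob : IsProbabilityMeasure ν)
    (hsupp : ν (odometerSet Γ) = 1)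
    (hinv : ∀ g : G, Measure.map (fun z : Π n, G ⧸ Γ n => g • z) ν = ν)
    -- ν gives every basic clopen set gCₙ its natural mass 1/[G : Γₙ] = 1/|Dₙ|
    (hval : ∀ (g : G) (n : ℕ),
      ν {z | z ∈ odometerSet Γ ∧ z n = (g : G ⧸ Γ n)} = 1 / ((D n).card : ENNReal))
    -- ν is the unique invariant probability measure on the odometer
    (huniq : ∀ ν' : Measure (Π n, G ⧸ Γ n), IsProbabilityMeasure ν' →
      ν' (odometerSet Γ) = 1 →
      (∀ g : G, Measure.map (fun z : Π n, G ⧸ Γ n => g • z) ν' = ν') → ν' = ν)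
    (nseq : ℕ → ℕ) (hmono : StrictMono nseq)
    (hratio : ∀ i : ℕ, 1 ≤ i →
      ((D (nseq (i - 1))).card : ℝ) / ((D (nseq i)).card : ℝ) < 1 / 2 ^ (i + 1)) :
    ν {z | z ∈ odometerSet Γ ∧ ∀ g : G, ∃ i : ℕ, 1 ≤ i ∧ ∃ t γ d : G,
        (t : G ⧸ Γ (nseq i)) = z (nseq i) ∧ γ ∈ Γ (nseq i) ∧ d ∈ D (nseq (i - 1)) ∧
        g = t * γ * d} = 0 := by
  classical
  set A : Set (Π n, G ⧸ Γ n) := {z | z ∈ odometerSet Γ ∧ ∀ g : G, ∃ i : ℕ, 1 ≤ i ∧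
      ∃ t γ d : G, (t : G ⧸ Γ (nseq i)) = z (nseq i) ∧ γ ∈ Γ (nseq i) ∧
      d ∈ D (nseq (i - 1)) ∧ g = t * γ * d} with hAdef
  -- coordinate preimages are measurable
  have hcoord : ∀ (n : ℕ) (s : Set (G ⧸ Γ n)),
      MeasurableSet {z : Π m, G ⧸ Γ m | z n ∈ s} :=
    fun n s => measurable_pi_apply n MeasurableSpace.measurableSet_top
  -- odometerSet is measurable
  have mOdo : MeasurableSet (odometerSet Γ) := by
    have he : odometerSet Γ = ⋂ (n : ℕ), ⋂ (g : G),
        ({z : Π m, G ⧸ Γ m | z (n + 1) ∈ ({(g : G ⧸ Γ (n + 1))}ᶜ : Set _)} ∪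
          {z : Π m, G ⧸ Γ m | z n ∈ ({(g : G ⧸ Γ n)} : Set _)}) := by
      ext z
      simp only [odometerSet, Set.mem_setOf_eq, Set.mem_iInter, Set.mem_union,
        Set.mem_compl_iff, Set.mem_singleton_iff]
      constructor
      · intro h n g
        by_cases hc : z (n + 1) = (g : G ⧸ Γ (n + 1))
        · exact Or.inr (h n g hc)
        · exact Or.inl hc
      · intro h n g hg
        rcases h n g with h' | h'
        · exact absurd hg h'
        · exact h'
    rw [he]
    exact MeasurableSet.iInter fun n => MeasurableSet.iInter fun g =>
      ((hcoord _ _).union (hcoord _ _))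
  -- A is measurable
  have mA : MeasurableSet A := by
    have he : A = odometerSet Γ ∩ ⋂ (g : G), ⋃ (i : ℕ), ⋃ (t : G),
        ({z : Π m, G ⧸ Γ m | z (nseq i) ∈ ({(t : G ⧸ Γ (nseq i))} : Set _)} ∩
          {_z : Π m, G ⧸ Γ m | 1 ≤ i ∧ ∃ γ d : G, γ ∈ Γ (nseq i) ∧
            d ∈ D (nseq (i - 1)) ∧ g = t * γ * d}) := by
      ext z
      simp only [hAdef, Set.mem_setOf_eq, Set.mem_inter_iff, Set.mem_iInter,
        Set.mem_iUnion, Set.mem_singleton_iff]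
      constructor
      · rintro ⟨hz, h⟩
        refine ⟨hz, fun g => ?_⟩
        obtain ⟨i, hi, t, γ, d, ht, hγ, hd, hg⟩ := h g
        exact ⟨i, t, ht.symm, hi, γ, d, hγ, hd, hg⟩
      · rintro ⟨hz, h⟩
        refine ⟨hz, fun g => ?_⟩
        obtain ⟨i, t, ht, hi, γ, d, hγ, hd, hg⟩ := h g
        exact ⟨i, hi, t, γ, d, ht.symm, hγ, hd, hg⟩
    rw [he]
    exact mOdo.inter (MeasurableSet.iInter fun g => MeasurableSet.iUnion fun i =>
      MeasurableSet.iUnion fun t => (hcoord _ _).inter (MeasurableSet.const _))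
  -- A is G-invariant
  have hstep : ∀ (g : G) (z : Π n, G ⧸ Γ n), z ∈ A → g • z ∈ A := by
    intro g z hz
    obtain ⟨hzo, hzc⟩ := hz
    constructor
    · intro n h hh
      have h1 : z (n + 1) = ((g⁻¹ * h : G) : G ⧸ Γ (n + 1)) := by
        have : g⁻¹ • ((g • z) (n + 1)) = g⁻¹ • ((h : G) : G ⧸ Γ (n + 1)) := by rw [hh]
        simpa [inv_smul_smul] using this
      have h2 := hzo n (g⁻¹ * h) h1
      show g • z n = ((h : G) : G ⧸ Γ n)
      rw [h2]
      show ((g * (g⁻¹ * h) : G) : G ⧸ Γ n) = ((h : G) : G ⧸ Γ n)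
      rw [mul_inv_cancel_left]
    · intro g'
      obtain ⟨i, hi, t, γ, d, ht, hγ, hd, hg⟩ := hzc (g⁻¹ * g')
      refine ⟨i, hi, g * t, γ, d, ?_, hγ, hd, ?_⟩
      · show ((g * t : G) : G ⧸ Γ (nseq i)) = g • z (nseq i)
        rw [← ht]; rfl
      · rw [mul_assoc, mul_assoc, ← mul_assoc t, ← hg, mul_inv_cancel_left]
  have hinvA : ∀ g : G, (fun z : Π n, G ⧸ Γ n => g • z) ⁻¹' A = A := by
    intro g
    ext z
    constructor
    · intro hz
      have := hstep g⁻¹ (g • z) hz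
      simpa [inv_smul_smul] using this
    · intro hz
      exact hstep g z hz
  -- the covering sets
  set S : ℕ → G → Set (Π n, G ⧸ Γ n) := fun j d =>
    {z | z ∈ odometerSet Γ ∧ z (nseq (j + 1)) = ((d⁻¹ : G) : G ⧸ Γ (nseq (j + 1)))}
    with hSdef
  have hsub : A ⊆ ⋃ (j : ℕ), ⋃ d ∈ D (nseq j), S j d := by
    intro z hz
    obtain ⟨hzo, hzc⟩ := hz
    obtain ⟨i, hi, t, γ, d, ht, hγ, hd, hg⟩ := hzc 1
    have hij : i = (i - 1) + 1 := (Nat.succ_pred_eq_of_pos hi).symm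
    refine Set.mem_iUnion.mpr ⟨i - 1, Set.mem_iUnion₂.mpr ⟨d, hd, ?_⟩⟩
    refine ⟨hzo, ?_⟩
    have htd : t = d⁻¹ * γ⁻¹ := by
      have h1 : t * (γ * d) = 1 := by rw [← mul_assoc]; exact hg.symm
      rw [mul_eq_one_iff_eq_inv] at h1
      rw [h1, mul_inv_rev]
    have : z (nseq i) = ((d⁻¹ : G) : G ⧸ Γ (nseq i)) := by
      rw [← ht, htd, QuotientGroup.mk_mul_of_mem d⁻¹ (inv_mem hγ)]
    rw [← hij]
    exact this
  -- the measure bound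
  have hDpos : ∀ m : ℕ, 0 < (D m).card := by
    intro m
    obtain ⟨d, ⟨hd, _⟩, _⟩ := hreps m 1
    exact Finset.card_pos.mpr ⟨d, hd⟩
  have hterm : ∀ j : ℕ,
      ((D (nseq j)).card : ENNReal) / ((D (nseq (j + 1))).card : ENNReal)
        ≤ (2 : ENNReal)⁻¹ ^ (j + 2) := by
    intro j
    have hr := hratio (j + 1) (by omega)
    simp only [Nat.add_sub_cancel] at hr
    have hbpos : (0 : ℝ) < ((D (nseq (j + 1))).card : ℝ) := by
      exact_mod_cast hDpos (nseq (j + 1))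
    have h2 : ((D (nseq j)).card : ℝ) * 2 ^ (j + 2) < ((D (nseq (j + 1))).card : ℝ) := by
      rw [div_lt_div_iff₀ hbpos (by positivity)] at hr
      nlinarith [hr]
    have hnat : 2 ^ (j + 2) * (D (nseq j)).card ≤ (D (nseq (j + 1))).card := by
      have : ((2 ^ (j + 2) * (D (nseq j)).card : ℕ) : ℝ) < (((D (nseq (j + 1))).card : ℕ) : ℝ) := by
        push_cast; linarith [h2]
      exact_mod_cast this.le
    have hcast : ((2 : ENNReal)) ^ (j + 2) * ((D (nseq j)).card : ENNReal)
        ≤ ((D (nseq (j + 1))).card : ENNReal) := by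
      have := hnat
      exact_mod_cast Nat.cast_le.mpr this
    refine ENNReal.div_le_of_le_mul ?_
    calc ((D (nseq j)).card : ENNReal)
        = (2 : ENNReal)⁻¹ ^ (j + 2) * ((2 : ENNReal) ^ (j + 2) * ((D (nseq j)).card : ENNReal)) := by
          rw [← mul_assoc, ← ENNReal.inv_pow, ENNReal.inv_mul_cancel
            (pow_ne_zero _ two_ne_zero) (ENNReal.pow_ne_top ENNReal.ofNat_ne_top), one_mul]
      _ ≤ (2 : ENNReal)⁻¹ ^ (j + 2) * ((D (nseq (j + 1))).card : ENNReal) := by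
          exact mul_le_mul_right hcast _
  have hbound : ν A ≤ 2⁻¹ := by
    calc ν A ≤ ν (⋃ (j : ℕ), ⋃ d ∈ D (nseq j), S j d) := measure_mono hsub
      _ ≤ ∑' (j : ℕ), ν (⋃ d ∈ D (nseq j), S j d) := measure_iUnion_le _
      _ ≤ ∑' (j : ℕ), ∑ d ∈ D (nseq j), ν (S j d) :=
          ENNReal.tsum_le_tsum fun j => measure_biUnion_finset_le _ _
      _ = ∑' (j : ℕ), ∑ d ∈ D (nseq j), 1 / ((D (nseq (j + 1))).card : ENNReal) := by
          refine tsum_congr fun j => Finset.sum_congr rfl fun d _ => ?_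
          exact hval d⁻¹ (nseq (j + 1))
      _ = ∑' (j : ℕ), ((D (nseq j)).card : ENNReal) * (1 / ((D (nseq (j + 1))).card : ENNReal)) := by
          refine tsum_congr fun j => ?_
          rw [Finset.sum_const, nsmul_eq_mul]
      _ ≤ ∑' (j : ℕ), (2 : ENNReal)⁻¹ ^ (j + 2) := by
          refine ENNReal.tsum_le_tsum fun j => ?_
          rw [mul_one_div]
          exact hterm j
      _ = 2⁻¹ := by
          simp_rw [pow_add]
          rw [ENNReal.tsum_mul_right, ENNReal.tsum_geometric, ENNReal.one_sub_inv_two, inv_inv,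
            pow_two, ← mul_assoc, ENNReal.mul_inv_cancel two_ne_zero ENNReal.ofNat_ne_top, one_mul]
  -- now conclude by unique ergodicity
  by_contra hne
  set c : ENNReal := ν A with hc
  have hct : c ≠ ⊤ := (lt_of_le_of_lt hbound (by simp)).ne
  have hc0 : c ≠ 0 := hne
  have hmeas_smul : ∀ g : G, Measurable (fun z : Π n, G ⧸ Γ n => g • z) := by
    intro g
    refine measurable_pi_lambda _ fun n => ?_
    exact Measurable.comp (fun s _ => MeasurableSpace.measurableSet_top) (measurable_pi_apply n)
  set ν' : Measure (Π n, G ⧸ Γ n) := c⁻¹ • ν.restrict A with hν'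
  have hν'prob : IsProbabilityMeasure ν' := by
    constructor
    rw [hν', Measure.smul_apply, Measure.restrict_apply_univ, smul_eq_mul, ← hc,
      ENNReal.inv_mul_cancel hc0 hct]
  have hν'supp : ν' (odometerSet Γ) = 1 := by
    rw [hν', Measure.smul_apply, Measure.restrict_apply mOdo, smul_eq_mul]
    have : odometerSet Γ ∩ A = A := Set.inter_eq_right.mpr fun z hz => hz.1
    rw [this, ← hc, ENNReal.inv_mul_cancel hc0 hct]
  have hν'inv : ∀ g : G, Measure.map (fun z : Π n, G ⧸ Γ n => g • z) ν' = ν' := by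
    intro g
    have hr : Measure.map (fun z : Π n, G ⧸ Γ n => g • z) (ν.restrict A) = ν.restrict A := by
      have := Measure.restrict_map (hmeas_smul g) mA (μ := ν)
      rw [hinv g, hinvA g] at this
      exact this.symm
    rw [hν', Measure.map_smul, hr]
  have heq := huniq ν' hν'prob hν'supp hν'inv
  have hA1 : ν A = 1 := by
    have : ν' A = ν A := by rw [heq]
    rw [hν', Measure.smul_apply, Measure.restrict_apply mA, Set.inter_self, smul_eq_mul,
      ← hc, ENNReal.inv_mul_cancel hc0 hct] at this
    exact this.symm
  have hfin : (1 : ENNReal) ≤ 2⁻¹ := by rw [← hA1, ← hc]; exact hbound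
  norm_num at hfin
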